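/- In the icosahedron graph, if {x, y, z, u} induces a tadpole T_{3,1} with triangle xyz and u adjacent only to x, then the unique vertex at distance 3 from u is adjacent to both y and z. -/

import Mathlib

open SimpleGraph Filter

/-- The 5-cycle graph on `ZMod 5`. -/
def C5 : SimpleGraph (ZMod 5) where
  Adj i j := j = i + 1 ∨ i = j + 1
  symm := ⟨fun i j h => by revert h; revert i j; decide⟩
  loopless := ⟨fun i h => by revert h; revert i; decide⟩

/-- A finset `s` is an induced pentagon (induced 5-cycle) of `G`. -/
def IsPentagon {V : Type*} (G : SimpleGraph V) (s : Finset V) : Prop :=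
  s.card = 5 ∧ Nonempty (G.induce (s : Set V) ≃g C5)

/-- The pentagon graph of `G`: vertices are the induced 5-cycles, adjacency is
sharing an edge. -/
def pentagonGraph {V : Type*} (G : SimpleGraph V) :
    SimpleGraph {s : Finset V // IsPentagon G s} where
  Adj p q := p ≠ q ∧ ∃ a b, G.Adj a b ∧ a ∈ p.1 ∧ b ∈ p.1 ∧ a ∈ q.1 ∧ b ∈ q.1
  symm := by
    constructor
    rintro p q ⟨h, a, b, hab, h1, h2, h3, h4⟩
    exact ⟨h.symm, a, b, hab, h3, h4, h1, h2⟩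
  loopless := by constructor; rintro p ⟨h, -⟩; exact h rfl
/-- Edge list of the icosahedron graph (skeleton of the regular icosahedron). -/
def icoEdges : List (Fin 12 × Fin 12) :=
  [(0,1),(0,2),(0,3),(0,4),(0,5),(1,2),(2,3),(3,4),(4,5),(5,1),
   (1,6),(1,7),(2,7),(2,8),(3,8),(3,9),(4,9),(4,10),(5,10),(5,6),
   (6,7),(7,8),(8,9),(9,10),(10,6),(11,6),(11,7),(11,8),(11,9),(11,10)]

/-- The icosahedron graph: the 5-regular graph on 12 vertices given by the
skeleton of the regular icosahedron. -/
def icosahedron : SimpleGraph (Fin 12) where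
  Adj a b := (a, b) ∈ icoEdges ∨ (b, a) ∈ icoEdges
  symm := ⟨fun a b h => by revert h; revert a b; decide⟩
  loopless := ⟨fun a h => by revert h; revert a; decide⟩

instance : DecidableRel icosahedron.Adj :=
  fun a b => inferInstanceAs (Decidable ((a, b) ∈ icoEdges ∨ (b, a) ∈ icoEdges))

/-- Edge list of the dodecahedron graph (skeleton of the regular dodecahedron). -/
def dodEdges : List (Fin 20 × Fin 20) :=
  [(0,1),(1,2),(2,3),(3,4),(4,0),
   (0,5),(1,6),(2,7),(3,8),(4,9),
   (5,10),(6,11),(7,12),(8,13),(9,14),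
   (10,6),(11,7),(12,8),(13,9),(14,5),
   (10,15),(11,16),(12,17),(13,18),(14,19),
   (15,16),(16,17),(17,18),(18,19),(19,15)]

/-- The dodecahedron graph: the 3-regular graph on 20 vertices given by the
skeleton of the regular dodecahedron. -/
def dodecahedron : SimpleGraph (Fin 20) where
  Adj a b := (a, b) ∈ dodEdges ∨ (b, a) ∈ dodEdges
  symm := ⟨fun a b h => by revert h; revert a b; decide⟩
  loopless := ⟨fun a h => by revert h; revert a; decide⟩

/-- The tadpole graph `T_{3,1}`: a triangle `0,1,2` with a pendant vertex `3`
attached to `0`. -/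
def tadpole : SimpleGraph (Fin 4) where
  Adj a b := (a, b) ∈ [((0:Fin 4),(1:Fin 4)),(0,2),(1,2),(0,3)] ∨
             (b, a) ∈ [((0:Fin 4),(1:Fin 4)),(0,2),(1,2),(0,3)]
  symm := ⟨fun a b h => by revert h; revert a b; decide⟩
  loopless := ⟨fun a h => by revert h; revert a; decide⟩

def anti : Fin 12 → Fin 12 := ![11,9,10,6,7,8,3,4,5,1,2,0]

set_option maxHeartbeats 2000000 in
lemma key1 : ∀ u w : Fin 12, u ≠ w → ¬ icosahedron.Adj u w →
    (∀ t, ¬(icosahedron.Adj u t ∧ icosahedron.Adj t w)) → w = anti u := by decide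

set_option maxHeartbeats 2000000 in
lemma key2 : ∀ x y z u : Fin 12,
    icosahedron.Adj x y → icosahedron.Adj y z → icosahedron.Adj x z →
    icosahedron.Adj u x → ¬ icosahedron.Adj u y → ¬ icosahedron.Adj u z →
    icosahedron.Adj (anti u) y ∧ icosahedron.Adj (anti u) z := by decide

/-- If `{x, y, z, u}` induces a tadpole in the icosahedron with triangle `xyz`
and `u` adjacent only to `x`, then the unique vertex at distance 3 from `u` is
adjacent to both `y` and `z`. -/
theorem stmt_12 :
    ∀ x y z u : Fin 12,
      icosahedron.Adj x y → icosahedron.Adj y z → icosahedron.Adj x z →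
      icosahedron.Adj u x → ¬ icosahedron.Adj u y → ¬ icosahedron.Adj u z →
      ∀ w : Fin 12, icosahedron.dist u w = 3 →
        icosahedron.Adj w y ∧ icosahedron.Adj w z := by
  intro x y z u hxy hyz hxz hux huy huz w hd
  have hne : u ≠ w := by
    rintro rfl; rw [SimpleGraph.dist_self] at hd; exact absurd hd (by norm_num)
  have hnadj : ¬ icosahedron.Adj u w := by
    intro h
    have := SimpleGraph.dist_le h.toWalk
    simp [SimpleGraph.Adj.toWalk] at this
    omega
  have hno : ∀ t, ¬(icosahedron.Adj u t ∧ icosahedron.Adj t w) := by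
    rintro t ⟨h1, h2⟩
    have := SimpleGraph.dist_le (SimpleGraph.Walk.cons h1 (SimpleGraph.Walk.cons h2 SimpleGraph.Walk.nil))
    simp at this
    omega
  have : w = anti u := key1 u w hne hnadj hno
  subst this
  exact key2 x y z u hxy hyz hxz hux huy huz
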